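/- Let K be a number field with ring of integers R, let m ≥ 1, and let J be an m×m matrix over K. Let Γ be a subgroup of O(J,K) which is commensurable with O(J,R), and let P ∈ O(J,K). Then Γ and P⁻¹·Γ·P are commensurable. -/

import Mathlib

open Matrix NumberField

variable {K : Type*} [Field K] [NumberField K] {m : ℕ}

/-- `O(J,K)`: the subgroup of `GL (Fin m) K` of elements `g` with `gᵀ · J · g = J`. -/
def OJK (J : Matrix (Fin m) (Fin m) K) : Subgroup (GL (Fin m) K) where
  carrier := {g | (↑g : Matrix (Fin m) (Fin m) K)ᵀ * J * (↑g : Matrix (Fin m) (Fin m) K) = J}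
  one_mem' := by simp
  mul_mem' := by
    intro a b ha hb
    simp only [Set.mem_setOf_eq, Units.val_mul, transpose_mul] at *
    calc (↑b : Matrix (Fin m) (Fin m) K)ᵀ * (↑a : Matrix (Fin m) (Fin m) K)ᵀ * J *
          ((↑a : Matrix (Fin m) (Fin m) K) * (↑b : Matrix (Fin m) (Fin m) K))
        = (↑b : Matrix (Fin m) (Fin m) K)ᵀ *
            (((↑a : Matrix (Fin m) (Fin m) K)ᵀ * J * (↑a : Matrix (Fin m) (Fin m) K)) *
              (↑b : Matrix (Fin m) (Fin m) K)) := by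
          simp only [mul_assoc]
      _ = J := by rw [ha, ← mul_assoc]; exact hb
  inv_mem' := by
    intro a ha
    simp only [Set.mem_setOf_eq] at *
    conv_lhs => rw [← ha]
    calc (↑a⁻¹ : Matrix (Fin m) (Fin m) K)ᵀ *
          ((↑a : Matrix (Fin m) (Fin m) K)ᵀ * J * (↑a : Matrix (Fin m) (Fin m) K)) *
            (↑a⁻¹ : Matrix (Fin m) (Fin m) K)
        = ((↑a : Matrix (Fin m) (Fin m) K) * (↑a⁻¹ : Matrix (Fin m) (Fin m) K))ᵀ *
            (J * ((↑a : Matrix (Fin m) (Fin m) K) * (↑a⁻¹ : Matrix (Fin m) (Fin m) K))) := by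
          rw [transpose_mul]; simp only [mul_assoc]
      _ = J := by rw [Units.mul_inv]; simp

/-- `O(J,R)`: the subgroup of `O(J,K)` of elements `g` all of whose entries, and all of
whose inverse's entries, are integral (lie in the image of the ring of integers `𝓞 K`). -/
def OJR (J : Matrix (Fin m) (Fin m) K) : Subgroup (GL (Fin m) K) where
  carrier := {g | g ∈ OJK J ∧
    (∀ i j, (↑g : Matrix (Fin m) (Fin m) K) i j ∈ (algebraMap (𝓞 K) K).range) ∧
    (∀ i j, (↑g⁻¹ : Matrix (Fin m) (Fin m) K) i j ∈ (algebraMap (𝓞 K) K).range)}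
  one_mem' := by
    have h : ∀ i j : Fin m,
        (1 : Matrix (Fin m) (Fin m) K) i j ∈ (algebraMap (𝓞 K) K).range := by
      intro i j
      rw [Matrix.one_apply]
      split
      · exact one_mem _
      · exact zero_mem _
    exact ⟨(OJK J).one_mem,
      fun i j => by simpa only [Units.val_one] using h i j,
      fun i j => by simpa only [inv_one, Units.val_one] using h i j⟩
  mul_mem' := by
    rintro a b ⟨haO, haE, haE'⟩ ⟨hbO, hbE, hbE'⟩
    refine ⟨(OJK J).mul_mem haO hbO, ?_, ?_⟩ <;> intro i j
    · rw [Units.val_mul, Matrix.mul_apply]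
      exact sum_mem fun k _ => mul_mem (haE i k) (hbE k j)
    · rw [_root_.mul_inv_rev, Units.val_mul, Matrix.mul_apply]
      exact sum_mem fun k _ => mul_mem (hbE' i k) (haE' k j)
  inv_mem' := by
    rintro a ⟨haO, haE, haE'⟩
    exact ⟨(OJK J).inv_mem haO, haE', by simp only [inv_inv]; exact haE⟩


set_option maxHeartbeats 1000000 in
set_option synthInstance.maxHeartbeats 400000 in
open Pointwise in
private lemma key_relIndex {K : Type*} [Field K] [NumberField K] {m : ℕ}
    (J : Matrix (Fin m) (Fin m) K) (Q : GL (Fin m) K) (hQ : Q ∈ OJK J) :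
    ((ConjAct.toConjAct Q • OJR J) : Subgroup (GL (Fin m) K)).relIndex (OJR J) ≠ 0 := by
  classical
  -- common denominator `d` for the entries of `Q` and `Q⁻¹`
  obtain ⟨b, hb⟩ := IsLocalization.exist_integer_multiples (nonZeroDivisors (𝓞 K))
    (Finset.univ : Finset (Bool × Fin m × Fin m))
    (fun p => if p.1 then (↑Q : Matrix (Fin m) (Fin m) K) p.2.1 p.2.2
      else (↑Q⁻¹ : Matrix (Fin m) (Fin m) K) p.2.1 p.2.2)
  set d : 𝓞 K := ↑b with hd_def
  have hd0 : d ≠ 0 := nonZeroDivisors.coe_ne_zero b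
  have hdQ : ∀ i j, algebraMap (𝓞 K) K d * (↑Q : Matrix (Fin m) (Fin m) K) i j ∈
      (algebraMap (𝓞 K) K).range := by
    intro i j
    have := hb (true, i, j) (Finset.mem_univ _)
    simpa [IsLocalization.IsInteger, Algebra.smul_def] using this
  have hdQ' : ∀ i j, algebraMap (𝓞 K) K d * (↑Q⁻¹ : Matrix (Fin m) (Fin m) K) i j ∈
      (algebraMap (𝓞 K) K).range := by
    intro i j
    have := hb (false, i, j) (Finset.mem_univ _)
    simpa [IsLocalization.IsInteger, Algebra.smul_def] using this
  set I : Ideal (𝓞 K) := Ideal.span {d * d} with hI_def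
  have hIbot : I ≠ ⊥ := by
    simp only [hI_def, Ne, Ideal.span_singleton_eq_bot]
    exact mul_ne_zero hd0 hd0
  haveI : Fintype ((𝓞 K) ⧸ I) := @Fintype.ofFinite _ (Ideal.finiteQuotientOfFreeOfNeBot I hIbot)
  -- a choice of integral representatives
  let ρ : K → 𝓞 K := fun x => if h : ∃ r : 𝓞 K, algebraMap (𝓞 K) K r = x then h.choose else 0
  have hρ : ∀ x : K, x ∈ (algebraMap (𝓞 K) K).range → algebraMap (𝓞 K) K (ρ x) = x := by
    intro x hx
    obtain ⟨r, hr⟩ := hx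
    have hex : ∃ r : 𝓞 K, algebraMap (𝓞 K) K r = x := ⟨r, hr⟩
    simp only [ρ, dif_pos hex]
    exact hex.choose_spec
  have hinj : Function.Injective
      (fun M : Matrix (Fin m) (Fin m) (𝓞 K) => M.map (algebraMap (𝓞 K) K)) := by
    intro A B h
    ext i j
    have := congrArg (fun M => M i j) h
    simp only [Matrix.map_apply] at this
    exact_mod_cast NumberField.RingOfIntegers.coe_injective this
  have hone1 : ∀ i j, (1 : Matrix (Fin m) (Fin m) K) i j ∈ (algebraMap (𝓞 K) K).range := by
    intro i j
    rw [Matrix.one_apply]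
    split
    · exact one_mem _
    · exact zero_mem _
  have hmapρ : ∀ A : Matrix (Fin m) (Fin m) K,
      (∀ i j, A i j ∈ (algebraMap (𝓞 K) K).range) →
      (A.map ρ).map (algebraMap (𝓞 K) K) = A := by
    intro A hA
    ext i j
    simp only [Matrix.map_apply]
    exact hρ _ (hA i j)
  have hmul : ∀ A B C : Matrix (Fin m) (Fin m) K,
      (∀ i j, A i j ∈ (algebraMap (𝓞 K) K).range) →
      (∀ i j, B i j ∈ (algebraMap (𝓞 K) K).range) →
      (∀ i j, C i j ∈ (algebraMap (𝓞 K) K).range) →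
      A * B = C → (A.map ρ) * (B.map ρ) = C.map ρ := by
    intro A B C hA hB hC h
    apply hinj
    show ((A.map ρ) * (B.map ρ)).map (algebraMap (𝓞 K) K) = (C.map ρ).map (algebraMap (𝓞 K) K)
    rw [Matrix.map_mul, hmapρ A hA, hmapρ B hB, hmapρ C hC, h]
  have hone : ((1 : Matrix (Fin m) (Fin m) K).map ρ) = (1 : Matrix (Fin m) (Fin m) (𝓞 K)) := by
    apply hinj
    show ((1 : Matrix (Fin m) (Fin m) K).map ρ).map (algebraMap (𝓞 K) K)
        = (1 : Matrix (Fin m) (Fin m) (𝓞 K)).map (algebraMap (𝓞 K) K)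
    rw [hmapρ _ hone1, Matrix.map_one _ (_root_.map_zero _) (_root_.map_one _)]
  -- reduction modulo I
  let red : Matrix (Fin m) (Fin m) K → Matrix (Fin m) (Fin m) ((𝓞 K) ⧸ I) :=
    fun A => (Ideal.Quotient.mk I).mapMatrix (A.map ρ)
  have red_mul : ∀ A B C : Matrix (Fin m) (Fin m) K,
      (∀ i j, A i j ∈ (algebraMap (𝓞 K) K).range) →
      (∀ i j, B i j ∈ (algebraMap (𝓞 K) K).range) →
      (∀ i j, C i j ∈ (algebraMap (𝓞 K) K).range) →
      A * B = C → red A * red B = red C := by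
    intro A B C hA hB hC h
    show (Ideal.Quotient.mk I).mapMatrix (A.map ρ) * (Ideal.Quotient.mk I).mapMatrix (B.map ρ)
        = (Ideal.Quotient.mk I).mapMatrix (C.map ρ)
    rw [← _root_.map_mul, hmul A B C hA hB hC h]
  have red_one : red (1 : Matrix (Fin m) (Fin m) K) = 1 := by
    show (Ideal.Quotient.mk I).mapMatrix ((1 : Matrix (Fin m) (Fin m) K).map ρ) = 1
    rw [hone, _root_.map_one]
  -- the reduction homomorphism
  have mem_triple : ∀ g : GL (Fin m) K, g ∈ OJR J → g ∈ OJK J ∧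
      (∀ i j, (↑g : Matrix (Fin m) (Fin m) K) i j ∈ (algebraMap (𝓞 K) K).range) ∧
      (∀ i j, (↑g⁻¹ : Matrix (Fin m) (Fin m) K) i j ∈ (algebraMap (𝓞 K) K).range) :=
    fun g hg => hg
  let φ : (OJR J) →* (Matrix (Fin m) (Fin m) ((𝓞 K) ⧸ I))ˣ :=
    { toFun := fun g =>
        { val := red (↑(↑g : GL (Fin m) K) : Matrix (Fin m) (Fin m) K)
          inv := red (↑((↑g : GL (Fin m) K)⁻¹) : Matrix (Fin m) (Fin m) K)
          val_inv := by
            obtain ⟨h1, h2, h3⟩ := mem_triple _ g.2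
            rw [red_mul _ _ _ h2 h3 hone1 (by rw [← Units.val_mul, mul_inv_cancel, Units.val_one]),
              red_one]
          inv_val := by
            obtain ⟨h1, h2, h3⟩ := mem_triple _ g.2
            rw [red_mul _ _ _ h3 h2 hone1 (by rw [← Units.val_mul, inv_mul_cancel, Units.val_one]),
              red_one] }
      map_one' := by
        apply Units.ext
        show red (↑((1 : (OJR J)) : GL (Fin m) K) : Matrix (Fin m) (Fin m) K) = ↑(1 : (Matrix (Fin m) (Fin m) ((𝓞 K) ⧸ I))ˣ)
        rw [Units.val_one]
        simpa using red_one
      map_mul' := by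
        intro g h
        apply Units.ext
        show red (↑((g * h : (OJR J)) : GL (Fin m) K) : Matrix (Fin m) (Fin m) K)
            = red (↑(↑g : GL (Fin m) K) : Matrix (Fin m) (Fin m) K)
              * red (↑(↑h : GL (Fin m) K) : Matrix (Fin m) (Fin m) K)
        obtain ⟨_, hg2, _⟩ := mem_triple _ g.2
        obtain ⟨_, hh2, _⟩ := mem_triple _ h.2
        obtain ⟨_, hgh2, _⟩ := mem_triple _ (g * h).2
        refine (red_mul _ _ _ hg2 hh2 hgh2 ?_).symm
        rw [show ((↑(g * h : (OJR J)) : GL (Fin m) K)) = ↑g * ↑h from rfl, Units.val_mul] }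
  have hker : φ.ker.index ≠ 0 := by
    rw [Subgroup.index_ker]
    exact Nat.card_pos.ne'
  -- kernel elements: entries ≡ 1 mod d²
  have hred1 : ∀ A : Matrix (Fin m) (Fin m) K,
      (∀ i j, A i j ∈ (algebraMap (𝓞 K) K).range) → red A = 1 →
      ∀ i j, ∃ r : 𝓞 K, A i j = (1 : Matrix (Fin m) (Fin m) K) i j +
        algebraMap (𝓞 K) K (d * d) * algebraMap (𝓞 K) K r := by
    intro A hA h i j
    have h' : Ideal.Quotient.mk I ((A.map ρ) i j)
        = Ideal.Quotient.mk I ((1 : Matrix (Fin m) (Fin m) (𝓞 K)) i j) := by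
      have h1 : red A = (Ideal.Quotient.mk I).mapMatrix (1 : Matrix (Fin m) (Fin m) (𝓞 K)) := by
        rw [h, _root_.map_one]
      have := congrArg (fun M => M i j) h1
      simpa only [red, RingHom.mapMatrix_apply, Matrix.map_apply] using this
    have hmem : (A.map ρ) i j - (1 : Matrix (Fin m) (Fin m) (𝓞 K)) i j ∈ I :=
      Ideal.Quotient.eq.mp h'
    obtain ⟨r, hr⟩ := Ideal.mem_span_singleton'.mp (by rwa [hI_def] at hmem)
    refine ⟨r, ?_⟩
    have hAij : algebraMap (𝓞 K) K ((A.map ρ) i j) = A i j := by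
      simpa only [Matrix.map_apply] using hρ _ (hA i j)
    have hone' : algebraMap (𝓞 K) K ((1 : Matrix (Fin m) (Fin m) (𝓞 K)) i j)
        = (1 : Matrix (Fin m) (Fin m) K) i j := by
      simp [Matrix.one_apply, apply_ite (algebraMap (𝓞 K) K)]
    have hcast := congrArg (algebraMap (𝓞 K) K) hr
    rw [_root_.map_mul, _root_.map_sub, hAij, hone'] at hcast
    linear_combination -hcast
  -- conjugates of congruence elements are integral
  have hQQ : (↑Q⁻¹ : Matrix (Fin m) (Fin m) K) * (↑Q : Matrix (Fin m) (Fin m) K) = 1 := by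
    rw [← Units.val_mul, inv_mul_cancel, Units.val_one]
  have hconj_int : ∀ g : GL (Fin m) K,
      (∀ i j, ∃ r : 𝓞 K, (↑g : Matrix (Fin m) (Fin m) K) i j =
        (1 : Matrix (Fin m) (Fin m) K) i j +
          algebraMap (𝓞 K) K (d * d) * algebraMap (𝓞 K) K r) →
      ∀ i j, (↑(Q⁻¹ * g * Q) : Matrix (Fin m) (Fin m) K) i j ∈ (algebraMap (𝓞 K) K).range := by
    intro g hg i j
    set A := (↑Q⁻¹ : Matrix (Fin m) (Fin m) K) with hA
    set C := (↑Q : Matrix (Fin m) (Fin m) K) with hC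
    set E := (↑g : Matrix (Fin m) (Fin m) K) - 1 with hE
    have hdecomp : (↑(Q⁻¹ * g * Q) : Matrix (Fin m) (Fin m) K) = A * E * C + 1 := by
      have hg' : (↑g : Matrix (Fin m) (Fin m) K) = E + 1 := by rw [hE]; abel
      rw [Units.val_mul, Units.val_mul, ← hA, ← hC, hg', mul_add, mul_one, add_mul, hQQ]
    rw [hdecomp, Matrix.add_apply]
    refine add_mem ?_ (hone1 i j)
    have hsum : (A * E * C) i j = ∑ l, ∑ k, A i k * E k l * C l j := by
      rw [Matrix.mul_apply]
      refine Finset.sum_congr rfl fun l _ => ?_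
      rw [Matrix.mul_apply, Finset.sum_mul]
    rw [hsum]
    refine sum_mem fun l _ => sum_mem fun k _ => ?_
    obtain ⟨r, hr⟩ := hg k l
    have hEkl : E k l = algebraMap (𝓞 K) K d * algebraMap (𝓞 K) K d * algebraMap (𝓞 K) K r := by
      rw [hE, Matrix.sub_apply, hr, _root_.map_mul]; ring
    have hterm : A i k * E k l * C l j =
        (algebraMap (𝓞 K) K d * A i k) * algebraMap (𝓞 K) K r
          * (algebraMap (𝓞 K) K d * C l j) := by
      rw [hEkl]; ring
    rw [hterm]
    exact mul_mem (mul_mem (hdQ' i k) ⟨r, rfl⟩) (hdQ l j)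
  -- kernel elements conjugate into OJR
  have hker_mem : ∀ g : (OJR J), g ∈ φ.ker →
      (↑g : GL (Fin m) K) ∈ ConjAct.toConjAct Q • (OJR J) := by
    intro g hg
    rw [Subgroup.mem_pointwise_smul_iff_inv_smul_mem]
    have hsmul : (ConjAct.toConjAct Q)⁻¹ • (↑g : GL (Fin m) K) = Q⁻¹ * ↑g * Q := by
      simp [ConjAct.smul_def]
    rw [hsmul]
    rw [MonoidHom.mem_ker] at hg
    obtain ⟨hg1, hg2, hg3⟩ := mem_triple _ g.2
    have hval : red (↑(↑g : GL (Fin m) K) : Matrix (Fin m) (Fin m) K) = 1 :=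
      congrArg Units.val hg
    have hinv2 : red (↑((↑g : GL (Fin m) K)⁻¹) : Matrix (Fin m) (Fin m) K) = 1 :=
      congrArg Units.inv hg
    have e1 := hred1 _ hg2 hval
    have e2 := hred1 _ hg3 hinv2
    refine ⟨(OJK J).mul_mem ((OJK J).mul_mem ((OJK J).inv_mem hQ) hg1) hQ, ?_, ?_⟩
    · exact hconj_int _ e1
    · have hrw : (Q⁻¹ * (↑g : GL (Fin m) K) * Q)⁻¹ = Q⁻¹ * (↑g : GL (Fin m) K)⁻¹ * Q := by
        simp [_root_.mul_inv_rev, mul_assoc]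
      rw [hrw]
      exact hconj_int _ e2
  -- put it together
  have hS : (φ.ker.map (OJR J).subtype) ≤ ConjAct.toConjAct Q • (OJR J) := by
    rintro x ⟨g, hgker, rfl⟩
    exact hker_mem g hgker
  have h1 := Subgroup.relIndex_dvd_of_le_left (OJR J) hS
  have h2 : (φ.ker.map (OJR J).subtype).relIndex (OJR J) = φ.ker.index := by
    rw [Subgroup.relIndex, Subgroup.subgroupOf,
      Subgroup.comap_map_eq_self_of_injective (OJR J).subtype_injective]
  rw [h2] at h1
  intro h0
  rw [h0] at h1
  exact hker (zero_dvd_iff.mp h1)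

open Pointwise in
theorem stmt_10 (hm : 1 ≤ m) (J : Matrix (Fin m) (Fin m) K)
    (Γ : Subgroup (GL (Fin m) K)) (hΓ : Γ ≤ OJK J)
    (hcomm : Subgroup.Commensurable Γ (OJR J))
    (P : GL (Fin m) K) (hP : P ∈ OJK J) :
    Subgroup.Commensurable Γ (Γ.map (MulAut.conj P⁻¹).toMonoidHom) := by
  classical
  have smul_eq : ∀ (Qg : GL (Fin m) K) (H : Subgroup (GL (Fin m) K)),
      ConjAct.toConjAct Qg • H = H.map (MulAut.conj Qg).toMonoidHom := by
    intro Qg H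
    ext x
    rw [Subgroup.mem_pointwise_smul_iff_inv_smul_mem, Subgroup.mem_map_equiv]
    simp [ConjAct.smul_def]
  have full : ∀ Qg : GL (Fin m) K, Qg ∈ OJK J →
      Subgroup.Commensurable (ConjAct.toConjAct Qg • OJR J) (OJR J) := by
    intro Qg hQg
    refine ⟨key_relIndex J Qg hQg, ?_⟩
    have h2 := key_relIndex J Qg⁻¹ ((OJK J).inv_mem hQg)
    have heq : (OJR J).relIndex (ConjAct.toConjAct Qg • OJR J)
        = (ConjAct.toConjAct Qg⁻¹ • OJR J).relIndex (OJR J) := by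
      rw [smul_eq, smul_eq]
      have hsymm : (MulAut.conj Qg).symm = MulAut.conj Qg⁻¹ := by
        rw [map_inv, MulAut.inv_def]
      have hmap : (OJR J).map (MulAut.conj Qg⁻¹).toMonoidHom
          = (OJR J).comap (MulAut.conj Qg).toMonoidHom := by
        rw [Subgroup.comap_equiv_eq_map_symm', hsymm]
      rw [hmap]
      exact (Subgroup.relIndex_comap (H := OJR J) ((MulAut.conj Qg).toMonoidHom) (OJR J)).symm
    rw [heq]
    exact h2
  have hP' : Subgroup.Commensurable (ConjAct.toConjAct P⁻¹ • Γ) Γ := by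
    have h1 : P⁻¹ ∈ Subgroup.Commensurable.commensurator (OJR J) :=
      (Subgroup.Commensurable.commensurator_mem_iff _ _).mpr (full P⁻¹ ((OJK J).inv_mem hP))
    rw [← Subgroup.Commensurable.eq hcomm] at h1
    exact (Subgroup.Commensurable.commensurator_mem_iff _ _).mp h1
  have hfin := hP'.symm
  rwa [smul_eq] at hfin
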